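/- Let M₁, M₂ ∈ ℕ with M₁, M₂ ≥ 2, set M := M₁·M₂, and let μ₁, μ₂ ∈ ℝ. For r = 1, 2 let a⁽ʳ⁾ ∈ ℂ^{M_r} have entries a⁽ʳ⁾_m = exp(i·m·μ_r) and let d⁽ʳ⁾ ∈ ℂ^{M_r} have entries d⁽ʳ⁾_m = i·m·exp(i·m·μ_r) (m = 0,…,M_r−1). Set a := a⁽¹⁾ ⊗ a⁽²⁾, d̃⁽¹⁾ := d⁽¹⁾ ⊗ a⁽²⁾ and d̃⁽²⁾ := a⁽¹⁾ ⊗ d⁽²⁾ (Kronecker products). Then: (i) for r = 1, 2, (d̃⁽ʳ⁾)ᴴ·d̃⁽ʳ⁾ − (1/M)·|(d̃⁽ʳ⁾)ᴴ·a|² = M·(M_r²−1)/12; (ii) (d̃⁽¹⁾)ᴴ·d̃⁽²⁾ − (1/M)·((d̃⁽¹⁾)ᴴ·a)·(aᴴ·d̃⁽²⁾) = 0. Consequently, for every real ρ̂ > 0, the trace of the 2-D deterministic single-source Cramér–Rao bound, (1/(2ρ̂))·( (M(M₁²−1)/12)^{-1} + (M(M₂²−1)/12)^{-1} ), equals (1/ρ̂)·(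 6/(M·(M₁²−1)) + 6/(M·(M₂²−1)) ). -/

import Mathlib

open Matrix BigOperators

lemma unit_e (m : ℕ) (μ : ℝ) :
    (starRingEnd ℂ) (Complex.exp (Complex.I * m * μ)) * Complex.exp (Complex.I * m * μ) = 1 := by
  rw [← Complex.exp_conj, ← Complex.exp_add]
  have h : (starRingEnd ℂ) (Complex.I * m * μ) + Complex.I * m * μ = 0 := by
    simp [_root_.map_mul, Complex.conj_I]
  rw [h, Complex.exp_zero]

lemma hdd (c : ℂ) (hc : (starRingEnd ℂ) c = c) (z : ℂ) (hz : (starRingEnd ℂ) z * z = 1) :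
    (starRingEnd ℂ) (Complex.I * c * z) * (Complex.I * c * z) = c ^ 2 := by
  rw [_root_.map_mul, _root_.map_mul, Complex.conj_I, hc]
  linear_combination c ^ 2 * hz - c ^ 2 * ((starRingEnd ℂ) z) * z * Complex.I_sq

lemma hda (c : ℂ) (hc : (starRingEnd ℂ) c = c) (z : ℂ) (hz : (starRingEnd ℂ) z * z = 1) :
    (starRingEnd ℂ) (Complex.I * c * z) * z = -Complex.I * c := by
  rw [_root_.map_mul, _root_.map_mul, Complex.conj_I, hc]
  linear_combination (-Complex.I * c) * hz

lemma had (c : ℂ) (z : ℂ) (hz : (starRingEnd ℂ) z * z = 1) :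
    (starRingEnd ℂ) z * (Complex.I * c * z) = Complex.I * c := by
  linear_combination (Complex.I * c) * hz

lemma sum_id_c (n : ℕ) : (∑ i ∈ Finset.range n, (i : ℂ)) * 2 = n * (n - 1) := by
  induction n with
  | zero => simp
  | succ k ih =>
    rw [Finset.sum_range_succ]
    push_cast
    linear_combination ih

lemma sum_sq_c (n : ℕ) : (∑ i ∈ Finset.range n, (i : ℂ) ^ 2) * 6 = n * (n - 1) * (2 * n - 1) := by
  induction n with
  | zero => simp
  | succ k ih =>
    rw [Finset.sum_range_succ]
    push_cast
    linear_combination ih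

lemma key_split {α β : Type*} [Fintype α] [Fintype β] (F : α → ℂ) (G : β → ℂ)
    (H : α × β → ℂ) (h : ∀ m, H m = F m.1 * G m.2) :
    ∑ m : α × β, H m = (∑ x, F x) * (∑ y, G y) := by
  rw [Finset.sum_congr rfl (fun m _ => h m), Fintype.sum_prod_type, Finset.sum_mul_sum]

theorem twoD_single_source_crb
    (M₁ M₂ : ℕ) (h1 : 2 ≤ M₁) (h2 : 2 ≤ M₂) (μ₁ μ₂ : ℝ)
    (a1 : Fin M₁ → ℂ) (a2 : Fin M₂ → ℂ)
    (ha1 : ∀ m, a1 m = Complex.exp (Complex.I * ((m : ℕ) : ℂ) * (μ₁ : ℂ)))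
    (ha2 : ∀ m, a2 m = Complex.exp (Complex.I * ((m : ℕ) : ℂ) * (μ₂ : ℂ)))
    (d1 : Fin M₁ → ℂ) (d2 : Fin M₂ → ℂ)
    (hd1 : ∀ m, d1 m = Complex.I * ((m : ℕ) : ℂ) *
      Complex.exp (Complex.I * ((m : ℕ) : ℂ) * (μ₁ : ℂ)))
    (hd2 : ∀ m, d2 m = Complex.I * ((m : ℕ) : ℂ) *
      Complex.exp (Complex.I * ((m : ℕ) : ℂ) * (μ₂ : ℂ)))
    (a dt1 dt2 : Fin M₁ × Fin M₂ → ℂ)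
    (ha : ∀ m, a m = a1 m.1 * a2 m.2)
    (hdt1 : ∀ m, dt1 m = d1 m.1 * a2 m.2)
    (hdt2 : ∀ m, dt2 m = a1 m.1 * d2 m.2) :
    ((∑ m, (starRingEnd ℂ) (dt1 m) * dt1 m) -
        (((M₁ : ℕ) * M₂ : ℕ) : ℂ)⁻¹ *
          (((‖∑ m, (starRingEnd ℂ) (dt1 m) * a m‖ ^ 2 : ℝ)) : ℂ) =
      (((M₁ : ℕ) * M₂ : ℕ) : ℂ) * ((M₁ : ℂ) ^ 2 - 1) / 12) ∧
    ((∑ m, (starRingEnd ℂ) (dt2 m) * dt2 m) -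
        (((M₁ : ℕ) * M₂ : ℕ) : ℂ)⁻¹ *
          (((‖∑ m, (starRingEnd ℂ) (dt2 m) * a m‖ ^ 2 : ℝ)) : ℂ) =
      (((M₁ : ℕ) * M₂ : ℕ) : ℂ) * ((M₂ : ℂ) ^ 2 - 1) / 12) ∧
    ((∑ m, (starRingEnd ℂ) (dt1 m) * dt2 m) -
        (((M₁ : ℕ) * M₂ : ℕ) : ℂ)⁻¹ *
          (∑ m, (starRingEnd ℂ) (dt1 m) * a m) *
          (∑ m, (starRingEnd ℂ) (a m) * dt2 m) = 0) ∧
    (∀ ρ : ℝ, 0 < ρ →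
      (1 / (2 * ρ)) * ((((M₁ : ℝ) * M₂) * ((M₁ : ℝ) ^ 2 - 1) / 12)⁻¹ +
          (((M₁ : ℝ) * M₂) * ((M₂ : ℝ) ^ 2 - 1) / 12)⁻¹) =
        (1 / ρ) * (6 / (((M₁ : ℝ) * M₂) * ((M₁ : ℝ) ^ 2 - 1)) +
          6 / (((M₁ : ℝ) * M₂) * ((M₂ : ℝ) ^ 2 - 1)))) := by
  have hM1 : (0:ℕ) < M₁ := by omega
  have hM2 : (0:ℕ) < M₂ := by omega
  have hM1c : (M₁ : ℂ) ≠ 0 := Nat.cast_ne_zero.mpr (by omega)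
  have hM2c : (M₂ : ℂ) ≠ 0 := Nat.cast_ne_zero.mpr (by omega)
  -- pointwise facts
  have z1 : ∀ m : Fin M₁, (starRingEnd ℂ) (a1 m) * a1 m = 1 := fun m => by
    rw [ha1]; exact unit_e m μ₁
  have z2 : ∀ m : Fin M₂, (starRingEnd ℂ) (a2 m) * a2 m = 1 := fun m => by
    rw [ha2]; exact unit_e m μ₂
  have w1 : ∀ m : Fin M₁, (starRingEnd ℂ) (d1 m) * d1 m = ((m : ℕ) : ℂ) ^ 2 := fun m => by
    rw [hd1]; exact hdd _ (Complex.conj_natCast _) _ (unit_e m μ₁)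
  have w2 : ∀ m : Fin M₂, (starRingEnd ℂ) (d2 m) * d2 m = ((m : ℕ) : ℂ) ^ 2 := fun m => by
    rw [hd2]; exact hdd _ (Complex.conj_natCast _) _ (unit_e m μ₂)
  have v1 : ∀ m : Fin M₁, (starRingEnd ℂ) (d1 m) * a1 m = -Complex.I * ((m : ℕ) : ℂ) :=
    fun m => by rw [hd1, ha1]; exact hda _ (Complex.conj_natCast _) _ (unit_e m μ₁)
  have u2 : ∀ m : Fin M₂, (starRingEnd ℂ) (a2 m) * d2 m = Complex.I * ((m : ℕ) : ℂ) :=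
    fun m => by rw [ha2, hd2]; exact had _ _ (unit_e m μ₂)
  -- abbreviations for sums
  set N₁ : ℕ := ∑ i ∈ Finset.range M₁, i with hN1
  set N₂ : ℕ := ∑ i ∈ Finset.range M₂, i with hN2
  set Q₁ : ℂ := ∑ x : Fin M₁, ((x : ℕ) : ℂ) ^ 2 with hQ1
  set Q₂ : ℂ := ∑ y : Fin M₂, ((y : ℕ) : ℂ) ^ 2 with hQ2
  have hS1 : (∑ x : Fin M₁, ((x : ℕ) : ℂ)) = (N₁ : ℂ) := by
    rw [hN1, Fin.sum_univ_eq_sum_range]; push_cast; rfl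
  have hS2 : (∑ y : Fin M₂, ((y : ℕ) : ℂ)) = (N₂ : ℂ) := by
    rw [hN2, Fin.sum_univ_eq_sum_range]; push_cast; rfl
  have hS1v : (N₁ : ℂ) * 2 = (M₁ : ℂ) * ((M₁ : ℂ) - 1) := by
    rw [← hS1, Fin.sum_univ_eq_sum_range]; exact sum_id_c M₁
  have hS2v : (N₂ : ℂ) * 2 = (M₂ : ℂ) * ((M₂ : ℂ) - 1) := by
    rw [← hS2, Fin.sum_univ_eq_sum_range]; exact sum_id_c M₂
  have hQ1v : Q₁ * 6 = (M₁ : ℂ) * ((M₁ : ℂ) - 1) * (2 * (M₁ : ℂ) - 1) := by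
    rw [hQ1, Fin.sum_univ_eq_sum_range (fun i => ((i : ℕ) : ℂ) ^ 2) M₁]; exact sum_sq_c M₁
  have hQ2v : Q₂ * 6 = (M₂ : ℂ) * ((M₂ : ℂ) - 1) * (2 * (M₂ : ℂ) - 1) := by
    rw [hQ2, Fin.sum_univ_eq_sum_range (fun i => ((i : ℕ) : ℂ) ^ 2) M₂]; exact sum_sq_c M₂
  have hQ1e : Q₁ = (M₁ : ℂ) * ((M₁ : ℂ) - 1) * (2 * (M₁ : ℂ) - 1) / 6 := by
    linear_combination hQ1v / 6
  have hQ2e : Q₂ = (M₂ : ℂ) * ((M₂ : ℂ) - 1) * (2 * (M₂ : ℂ) - 1) / 6 := by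
    linear_combination hQ2v / 6
  have hN1e : (N₁ : ℂ) = (M₁ : ℂ) * ((M₁ : ℂ) - 1) / 2 := by linear_combination hS1v / 2
  have hN2e : (N₂ : ℂ) = (M₂ : ℂ) * ((M₂ : ℂ) - 1) / 2 := by linear_combination hS2v / 2
  have hone1 : (∑ _x : Fin M₁, (1 : ℂ)) = (M₁ : ℂ) := by simp
  have hone2 : (∑ _y : Fin M₂, (1 : ℂ)) = (M₂ : ℂ) := by simp
  -- the six structured sums
  have T11 : ∑ m, (starRingEnd ℂ) (dt1 m) * dt1 m = Q₁ * (M₂ : ℂ) := by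
    rw [key_split (fun x : Fin M₁ => ((x : ℕ) : ℂ) ^ 2) (fun _ : Fin M₂ => (1 : ℂ)) _
      (fun m => by
        rw [hdt1, _root_.map_mul]
        linear_combination ((starRingEnd ℂ) (a2 m.2) * a2 m.2) * w1 m.1 +
          ((m.1 : ℕ) : ℂ) ^ 2 * z2 m.2), hone2, hQ1]
  have T22 : ∑ m, (starRingEnd ℂ) (dt2 m) * dt2 m = (M₁ : ℂ) * Q₂ := by
    rw [key_split (fun _ : Fin M₁ => (1 : ℂ)) (fun y : Fin M₂ => ((y : ℕ) : ℂ) ^ 2) _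
      (fun m => by
        rw [hdt2, _root_.map_mul]
        linear_combination ((starRingEnd ℂ) (d2 m.2) * d2 m.2) * z1 m.1 +
          1 * w2 m.2), hone1, hQ2]
  have T1a : ∑ m, (starRingEnd ℂ) (dt1 m) * a m = -(Complex.I * ((N₁ * M₂ : ℕ) : ℂ)) := by
    rw [key_split (fun x : Fin M₁ => -Complex.I * ((x : ℕ) : ℂ)) (fun _ : Fin M₂ => (1 : ℂ)) _
      (fun m => by
        rw [hdt1, ha, _root_.map_mul]
        linear_combination ((starRingEnd ℂ) (a2 m.2) * a2 m.2) * v1 m.1 +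
          (-Complex.I * ((m.1 : ℕ) : ℂ)) * z2 m.2), hone2, ← Finset.mul_sum, hS1]
    push_cast; ring
  have T2a : ∑ m, (starRingEnd ℂ) (dt2 m) * a m = -(Complex.I * ((M₁ * N₂ : ℕ) : ℂ)) := by
    rw [key_split (fun _ : Fin M₁ => (1 : ℂ)) (fun y : Fin M₂ => -Complex.I * ((y : ℕ) : ℂ)) _
      (fun m => by
        rw [hdt2, ha, _root_.map_mul]
        have hv2 : (starRingEnd ℂ) (d2 m.2) * a2 m.2 = -Complex.I * ((m.2 : ℕ) : ℂ) := by
          rw [hd2, ha2]; exact hda _ (Complex.conj_natCast _) _ (unit_e m.2 μ₂)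
        linear_combination (-Complex.I * ((m.2 : ℕ) : ℂ)) * z1 m.1 +
          ((starRingEnd ℂ) (a1 m.1) * a1 m.1) * hv2), hone1, ← Finset.mul_sum, hS2]
    push_cast; ring
  have T12 : ∑ m, (starRingEnd ℂ) (dt1 m) * dt2 m = ((N₁ : ℂ)) * ((N₂ : ℂ)) := by
    rw [key_split (fun x : Fin M₁ => -Complex.I * ((x : ℕ) : ℂ))
      (fun y : Fin M₂ => Complex.I * ((y : ℕ) : ℂ)) _
      (fun m => by
        rw [hdt1, hdt2, _root_.map_mul]
        linear_combination ((starRingEnd ℂ) (a2 m.2) * d2 m.2) * v1 m.1 +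
          (-Complex.I * ((m.1 : ℕ) : ℂ)) * u2 m.2), ← Finset.mul_sum, ← Finset.mul_sum,
      hS1, hS2]
    linear_combination (-(N₁ : ℂ) * (N₂ : ℂ)) * Complex.I_sq
  have Ta2 : ∑ m, (starRingEnd ℂ) (a m) * dt2 m = Complex.I * ((M₁ : ℂ) * (N₂ : ℂ)) := by
    rw [key_split (fun _ : Fin M₁ => (1 : ℂ)) (fun y : Fin M₂ => Complex.I * ((y : ℕ) : ℂ)) _
      (fun m => by
        rw [ha, hdt2, _root_.map_mul]
        linear_combination (Complex.I * ((m.2 : ℕ) : ℂ)) * z1 m.1 +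
          ((starRingEnd ℂ) (a1 m.1) * a1 m.1) * u2 m.2), hone1, ← Finset.mul_sum, hS2]
    ring
  -- norms
  have norm1 : (‖∑ m, (starRingEnd ℂ) (dt1 m) * a m‖ ^ 2 : ℝ) = ((N₁ * M₂ : ℕ) : ℝ) ^ 2 := by
    rw [T1a]; simp [norm_mul]
  have norm2 : (‖∑ m, (starRingEnd ℂ) (dt2 m) * a m‖ ^ 2 : ℝ) = ((M₁ * N₂ : ℕ) : ℝ) ^ 2 := by
    rw [T2a]; simp [norm_mul]
  refine ⟨?_, ?_, ?_, ?_⟩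
  · rw [T11, norm1]
    push_cast
    rw [hQ1e, hN1e]
    field_simp
    ring
  · rw [T22, norm2]
    push_cast
    rw [hQ2e, hN2e]
    field_simp
    ring
  · rw [T12, T1a, Ta2]
    push_cast
    field_simp
    linear_combination ((N₁ : ℂ) * (N₂ : ℂ)) * Complex.I_sq
  · intro ρ hρ
    have hM1r : (1:ℝ) < (M₁ : ℝ) := by exact_mod_cast (by omega : 1 < M₁)
    have hM2r : (1:ℝ) < (M₂ : ℝ) := by exact_mod_cast (by omega : 1 < M₂)
    have e1 : ((M₁:ℝ)^2 - 1) ≠ 0 := by nlinarith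
    have e2 : ((M₂:ℝ)^2 - 1) ≠ 0 := by nlinarith
    have e3 : (M₁:ℝ) * M₂ ≠ 0 := by positivity
    field_simp
    ring
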